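/- Let (y₁,y₂) : [0,T) → (0,∞)² be a differentiable solution of the ODE system with y₁(0), y₂(0) > 0. Assume a₁ > 0 and a₂ > 0, and suppose c > 0 is a constant such that y₁(t) ≥ c·(h₁(t)/h₂(t))^{1/a₁}·y₂(t)^{a₂/a₁} for all t ∈ [0,T). Set α₁ = p₁₁ + p₁₂·a₁/a₂ and F(t) = c^{−p₁₂·a₁/a₂}·∫₀ᵗ h₁(s)·(h₁(s)/h₂(s))^{−p₁₂/a₂} ds. Then for every t ∈ [0,T): ∫_{y₁(0)}^{y₁(t)} s^{−α₁} ds ≤ F(t). Consequently, if α₁ ≤ 1, or if α₁ > 1 and F(t) ≤ y₁(0)^{1−α₁}/(α₁−1) for all t ≥ 0, then for every finite S > 0 one has sup{ y₁(t) : t ∈ [0,T), t ≤ S } < ∞ (the first component does not blow up in finite time). -/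

import Mathlib

open MeasureTheory Set intervalIntegral

lemma aux_integral_le {T t : ℝ} (ht0 : 0 ≤ t) (htT : t < T)
    (y d g : ℝ → ℝ) (α : ℝ)
    (hy : ∀ s ∈ Set.Ico (0:ℝ) T, HasDerivWithinAt y (d s) (Set.Ico 0 T) s)
    (hypos : ∀ s ∈ Set.Ico (0:ℝ) T, 0 < y s)
    (hdc : ContinuousOn d (Set.Icc 0 t))
    (hgc : ContinuousOn g (Set.Icc 0 t))
    (hle : ∀ s ∈ Set.Icc 0 t, d s * (y s) ^ (-α) ≤ g s) :
    (∫ s in (y 0)..(y t), s ^ (-α)) ≤ ∫ s in (0:ℝ)..t, g s := by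
  have hsub : Set.Icc (0:ℝ) t ⊆ Set.Ico 0 T :=
    fun x hx => ⟨hx.1, lt_of_le_of_lt hx.2 htT⟩
  have huIcc : Set.uIcc (0:ℝ) t = Set.Icc 0 t := Set.uIcc_of_le ht0
  have hyc : ContinuousOn y (Set.Icc 0 t) := fun x hx =>
    ((hy x (hsub hx)).continuousWithinAt).mono hsub
  have hderiv : ∀ x ∈ Set.Ioo (min (0:ℝ) t) (max 0 t),
      HasDerivWithinAt y (d x) (Set.Ioi x) x := by
    intro x hx
    rw [min_eq_left ht0, max_eq_right ht0] at hx
    have hxI : x ∈ Set.Ico (0:ℝ) T := ⟨hx.1.le, lt_of_lt_of_le hx.2 htT.le⟩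
    refine (hy x hxI).mono_of_mem_nhdsWithin ?_
    have h1 : Set.Iio T ∩ Set.Ioi x ⊆ Set.Ico 0 T := by
      intro z hz
      exact ⟨le_of_lt (lt_of_le_of_lt hxI.1 hz.2), hz.1⟩
    refine Filter.mem_of_superset ?_ h1
    exact Filter.inter_mem (mem_nhdsWithin_of_mem_nhds (Iio_mem_nhds hxI.2))
      self_mem_nhdsWithin
  have hgcont : ContinuousOn (fun u : ℝ => u ^ (-α)) (y '' Set.uIcc 0 t) := by
    refine ContinuousOn.rpow_const continuousOn_id fun u hu => ?_
    obtain ⟨s, hs, rfl⟩ := hu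
    exact Or.inl (ne_of_gt (hypos s (hsub (huIcc ▸ hs))))
  have hcov := integral_comp_smul_deriv'' (a := 0) (b := t)
    (f := y) (f' := d) (g := fun u : ℝ => u ^ (-α))
    (huIcc ▸ hyc) hderiv (huIcc ▸ hdc) hgcont
  simp only [smul_eq_mul, Function.comp] at hcov
  rw [← hcov]
  refine integral_mono_on ht0 ?_ ?_ hle
  · exact ContinuousOn.intervalIntegrable (huIcc ▸ (hdc.mul (hyc.rpow_const fun x hx =>
      Or.inl (ne_of_gt (hypos x (hsub hx))))))
  · exact ContinuousOn.intervalIntegrable (huIcc ▸ hgc)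

lemma aux_ptwise (p11 p12 a1 a2 c hh H A B : ℝ)
    (hp12 : 0 ≤ p12) (ha1 : 0 < a1) (ha2 : 0 < a2) (hc : 0 < c)
    (hhh : 0 < hh) (hH : 0 < H) (hA : 0 < A) (hB : 0 < B)
    (hb : c * H ^ (1/a1) * B ^ (a2/a1) ≤ A) :
    hh * A ^ p11 * B ^ p12 * A ^ (-(p11 + p12 * (a1/a2))) ≤
      c ^ (-(p12 * a1 / a2)) * (hh * H ^ (-(p12/a2))) := by
  set q : ℝ := p12 * a1 / a2 with hqdef
  set e : ℝ := p12 / a2 with hedef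
  have hq : 0 ≤ q := by positivity
  have raised : (c * H ^ (1/a1) * B ^ (a2/a1)) ^ q ≤ A ^ q :=
    Real.rpow_le_rpow (by positivity) hb hq
  have expand : (c * H ^ (1/a1) * B ^ (a2/a1)) ^ q = c ^ q * H ^ e * B ^ p12 := by
    rw [Real.mul_rpow (by positivity) (by positivity),
      Real.mul_rpow (by positivity) (by positivity),
      ← Real.rpow_mul hH.le, ← Real.rpow_mul hB.le]
    have e1 : 1/a1 * q = e := by
      rw [hqdef, hedef]; field_simp
    have e2 : a2/a1 * q = p12 := by
      rw [hqdef]; field_simp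
    rw [e1, e2]
  rw [expand] at raised
  have key : B ^ p12 / A ^ q ≤ 1 / (c ^ q * H ^ e) := by
    rw [div_le_div_iff₀ (by positivity) (by positivity)]
    calc B ^ p12 * (c ^ q * H ^ e) = c ^ q * H ^ e * B ^ p12 := by ring
      _ ≤ 1 * A ^ q := by linarith
  have hexp : p11 + -(p11 + p12 * (a1/a2)) = -q := by
    rw [hqdef, mul_div_assoc]; ring
  have hAeq : A ^ p11 * A ^ (-(p11 + p12 * (a1/a2))) = (A ^ q)⁻¹ := by
    rw [← Real.rpow_add hA, hexp, Real.rpow_neg hA.le]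
  calc hh * A ^ p11 * B ^ p12 * A ^ (-(p11 + p12 * (a1/a2)))
      = hh * (B ^ p12 * (A ^ p11 * A ^ (-(p11 + p12 * (a1/a2))))) := by ring
    _ = hh * (B ^ p12 * (A ^ q)⁻¹) := by rw [hAeq]
    _ = hh * (B ^ p12 / A ^ q) := by rw [div_eq_mul_inv]
    _ ≤ hh * (1 / (c ^ q * H ^ e)) := mul_le_mul_of_nonneg_left key hhh.le
    _ = c ^ (-q) * (hh * H ^ (-e)) := by
        rw [Real.rpow_neg hc.le, Real.rpow_neg hH.le]; field_simp

theorem statement14 (p11 p12 p21 p22 : ℝ)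
    (hp11 : 0 ≤ p11) (hp12 : 0 ≤ p12) (hp21 : 0 ≤ p21) (hp22 : 0 ≤ p22)
    (h1 h2 : ℝ → ℝ)
    (hh1c : ContinuousOn h1 (Set.Ici 0)) (hh2c : ContinuousOn h2 (Set.Ici 0))
    (hh1p : ∀ t : ℝ, 0 ≤ t → 0 < h1 t) (hh2p : ∀ t : ℝ, 0 ≤ t → 0 < h2 t)
    (T : ℝ) (hT : 0 < T)
    (y1 y2 : ℝ → ℝ)
    (hy1pos : ∀ t ∈ Set.Ico (0:ℝ) T, 0 < y1 t)
    (hy2pos : ∀ t ∈ Set.Ico (0:ℝ) T, 0 < y2 t)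
    (hy1d : ∀ t ∈ Set.Ico (0:ℝ) T,
      HasDerivWithinAt y1 (h1 t * y1 t ^ p11 * y2 t ^ p12) (Set.Ico 0 T) t)
    (hy2d : ∀ t ∈ Set.Ico (0:ℝ) T,
      HasDerivWithinAt y2 (h2 t * y2 t ^ p22 * y1 t ^ p21) (Set.Ico 0 T) t)
    (ha1 : 0 < p21 - p11 + 1) (ha2 : 0 < p12 - p22 + 1)
    (c : ℝ) (hc : 0 < c)
    (hbound : ∀ t ∈ Set.Ico (0:ℝ) T,
      c * (h1 t / h2 t) ^ (1 / (p21 - p11 + 1)) *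
          y2 t ^ ((p12 - p22 + 1) / (p21 - p11 + 1)) ≤ y1 t) :
    (∀ t ∈ Set.Ico (0:ℝ) T,
      (∫ s in (y1 0)..(y1 t),
          s ^ (-(p11 + p12 * ((p21 - p11 + 1) / (p12 - p22 + 1))))) ≤
        c ^ (-(p12 * (p21 - p11 + 1) / (p12 - p22 + 1))) *
          ∫ s in (0:ℝ)..t, h1 s * (h1 s / h2 s) ^ (-(p12 / (p12 - p22 + 1)))) ∧
    (((p11 + p12 * ((p21 - p11 + 1) / (p12 - p22 + 1))) ≤ 1 ∨
        (1 < p11 + p12 * ((p21 - p11 + 1) / (p12 - p22 + 1)) ∧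
          ∀ t : ℝ, 0 ≤ t →
            c ^ (-(p12 * (p21 - p11 + 1) / (p12 - p22 + 1))) *
                (∫ s in (0:ℝ)..t, h1 s * (h1 s / h2 s) ^ (-(p12 / (p12 - p22 + 1)))) ≤
              y1 0 ^ (1 - (p11 + p12 * ((p21 - p11 + 1) / (p12 - p22 + 1)))) /
                ((p11 + p12 * ((p21 - p11 + 1) / (p12 - p22 + 1))) - 1))) →
      ∀ S : ℝ, 0 < S → ∃ C : ℝ, ∀ t ∈ Set.Ico (0:ℝ) T, t ≤ S → y1 t ≤ C) := by
  have hy10 : 0 < y1 0 := hy1pos 0 ⟨le_refl 0, hT⟩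
  set a1 : ℝ := p21 - p11 + 1 with ha1d
  set a2 : ℝ := p12 - p22 + 1 with ha2d
  set α : ℝ := p11 + p12 * (a1 / a2) with hαd
  set K : ℝ := -(p12 * a1 / a2) with hKd
  set g0 : ℝ → ℝ := fun s => h1 s * (h1 s / h2 s) ^ (-(p12 / a2)) with hg0d
  have hKpos : 0 < c ^ K := Real.rpow_pos_of_pos hc K
  have hg0pos : ∀ s : ℝ, 0 ≤ s → 0 < g0 s := fun s hs =>
    mul_pos (hh1p s hs) (Real.rpow_pos_of_pos (div_pos (hh1p s hs) (hh2p s hs)) _)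
  have hg0cont : ContinuousOn g0 (Set.Ici 0) := by
    refine hh1c.mul (ContinuousOn.rpow_const
      (hh1c.div hh2c fun x hx => (hh2p x hx).ne') fun x hx =>
      Or.inl (div_pos (hh1p x hx) (hh2p x hx)).ne')
  have hg0int : ∀ a b : ℝ, 0 ≤ a → a ≤ b → IntervalIntegrable g0 volume a b := by
    intro a b ha hab
    apply ContinuousOn.intervalIntegrable
    apply hg0cont.mono
    rw [Set.uIcc_of_le hab]
    exact fun x hx => le_trans ha hx.1
  have part1 : ∀ t ∈ Set.Ico (0:ℝ) T,
      (∫ s in (y1 0)..(y1 t), s ^ (-α)) ≤ c ^ K * ∫ s in (0:ℝ)..t, g0 s := by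
    intro t ht
    obtain ⟨ht0, htT⟩ := ht
    have hsub : Set.Icc (0:ℝ) t ⊆ Set.Ico 0 T :=
      fun x hx => ⟨hx.1, lt_of_le_of_lt hx.2 htT⟩
    have hsubI : Set.Icc (0:ℝ) t ⊆ Set.Ici 0 := fun x hx => hx.1
    have hy1cont : ContinuousOn y1 (Set.Icc 0 t) := fun x hx =>
      ((hy1d x (hsub hx)).continuousWithinAt).mono hsub
    have hy2cont : ContinuousOn y2 (Set.Icc 0 t) := fun x hx =>
      ((hy2d x (hsub hx)).continuousWithinAt).mono hsub
    have hdc : ContinuousOn (fun s => h1 s * y1 s ^ p11 * y2 s ^ p12) (Set.Icc 0 t) :=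
      ((hh1c.mono hsubI).mul (hy1cont.rpow_const fun x hx =>
        Or.inl (hy1pos x (hsub hx)).ne')).mul
        (hy2cont.rpow_const fun x hx => Or.inl (hy2pos x (hsub hx)).ne')
    have hgc : ContinuousOn (fun s => c ^ K * g0 s) (Set.Icc 0 t) :=
      continuousOn_const.mul (hg0cont.mono hsubI)
    have hle : ∀ s ∈ Set.Icc (0:ℝ) t,
        (h1 s * y1 s ^ p11 * y2 s ^ p12) * (y1 s) ^ (-α) ≤ c ^ K * g0 s := by
      intro s hs
      exact aux_ptwise p11 p12 a1 a2 c (h1 s) (h1 s / h2 s) (y1 s) (y2 s)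
        hp12 ha1 ha2 hc (hh1p s hs.1)
        (div_pos (hh1p s hs.1) (hh2p s hs.1)) (hy1pos s (hsub hs)) (hy2pos s (hsub hs))
        (hbound s (hsub hs))
    calc (∫ s in (y1 0)..(y1 t), s ^ (-α))
        ≤ ∫ s in (0:ℝ)..t, c ^ K * g0 s :=
          aux_integral_le ht0 htT y1 _ _ α hy1d hy1pos hdc hgc hle
      _ = c ^ K * ∫ s in (0:ℝ)..t, g0 s := intervalIntegral.integral_const_mul _ _
  refine ⟨part1, ?_⟩
  intro hyp S hS
  have key : ∀ u : ℝ, 0 ≤ u → ∀ t ∈ Set.Ico (0:ℝ) T, t ≤ u →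
      (∫ s in (y1 0)..(y1 t), s ^ (-α)) ≤ c ^ K * ∫ s in (0:ℝ)..u, g0 s := by
    intro u hu t ht htu
    refine le_trans (part1 t ht) ?_
    refine mul_le_mul_of_nonneg_left ?_ hKpos.le
    refine intervalIntegral.integral_mono_interval le_rfl ht.1 htu ?_
      (hg0int 0 u le_rfl hu)
    filter_upwards [MeasureTheory.ae_restrict_mem measurableSet_Ioc] with x hx
    exact (hg0pos x hx.1.le).le
  rcases hyp with hα | ⟨hα, hF⟩
  · -- α ≤ 1
    have hU0 : (0:ℝ) ≤ max S T := le_trans hT.le (le_max_right _ _)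
    set B : ℝ := c ^ K * ∫ s in (0:ℝ)..(max S T), g0 s with hBd
    rcases eq_or_lt_of_le hα with heq | hlt
    · -- α = 1
      refine ⟨y1 0 * Real.exp B, ?_⟩
      intro t ht htS
      have hy1t : 0 < y1 t := hy1pos t ht
      have h2 := key (max S T) hU0 t ht (le_trans htS (le_max_left _ _))
      have e : (∫ s in (y1 0)..(y1 t), s ^ (-α)) = Real.log (y1 t / y1 0) := by
        rw [heq]
        simp_rw [Real.rpow_neg_one]
        exact integral_inv_of_pos hy10 hy1t
      rw [e] at h2
      rw [Real.log_le_iff_le_exp (div_pos hy1t hy10), div_le_iff₀ hy10] at h2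
      calc y1 t ≤ Real.exp B * y1 0 := h2
        _ = y1 0 * Real.exp B := by ring
    · -- α < 1
      have h1α : 0 < 1 - α := by linarith
      refine ⟨(y1 0 ^ (1-α) + (1-α) * B) ^ (1/(1-α)), ?_⟩
      intro t ht htS
      have hy1t : 0 < y1 t := hy1pos t ht
      have h2 := key (max S T) hU0 t ht (le_trans htS (le_max_left _ _))
      have e : (∫ s in (y1 0)..(y1 t), s ^ (-α))
          = (y1 t ^ (1-α) - y1 0 ^ (1-α)) / (1-α) := by
        rw [integral_rpow (Or.inl (by linarith : (-1:ℝ) < -α)),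
          show -α + 1 = 1 - α from by ring]
      rw [e, div_le_iff₀ h1α] at h2
      have h4 : y1 t ^ (1-α) ≤ y1 0 ^ (1-α) + (1-α) * B := by nlinarith [h2]
      calc y1 t = (y1 t ^ (1-α)) ^ (1/(1-α)) := by
            rw [← Real.rpow_mul hy1t.le, one_div, mul_inv_cancel₀ h1α.ne', Real.rpow_one]
        _ ≤ (y1 0 ^ (1-α) + (1-α) * B) ^ (1/(1-α)) :=
            Real.rpow_le_rpow (Real.rpow_nonneg hy1t.le _) h4 (by positivity)
  · -- α > 1
    have h1α : 1 - α < 0 := by linarith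
    have hαm : 0 < α - 1 := by linarith
    set B : ℝ := c ^ K * ∫ s in (0:ℝ)..T, g0 s with hBd
    set δ : ℝ := c ^ K * ∫ s in T..(T+1), g0 s with hδd
    have hδpos : 0 < δ := by
      refine mul_pos hKpos ?_
      refine intervalIntegral.intervalIntegral_pos_of_pos_on
        (hg0int T (T+1) hT.le (by linarith)) ?_ (by linarith)
      exact fun x hx => hg0pos x (le_trans hT.le hx.1.le)
    have hsplit : B + δ = c ^ K * ∫ s in (0:ℝ)..(T+1), g0 s := by
      rw [hBd, hδd, ← mul_add,
        intervalIntegral.integral_add_adjacent_intervals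
          (hg0int 0 T le_rfl hT.le) (hg0int T (T+1) hT.le (by linarith))]
    have hL := hF (T+1) (by linarith)
    rw [← hsplit, le_div_iff₀ hαm] at hL
    have hεpos : 0 < (α-1) * δ := mul_pos hαm hδpos
    refine ⟨((α-1) * δ) ^ (1/(1-α)), ?_⟩
    intro t ht htS
    have hy1t : 0 < y1 t := hy1pos t ht
    have h2 := key T hT.le t ht ht.2.le
    have e : (∫ s in (y1 0)..(y1 t), s ^ (-α))
        = (y1 t ^ (1-α) - y1 0 ^ (1-α)) / (1-α) := by
      rw [integral_rpow (r := -α) (Or.inr ⟨by intro h; rw [neg_inj] at h; linarith,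
        fun h0 => by rw [Set.mem_uIcc] at h0; rcases h0 with h0 | h0 <;> linarith [h0.1, h0.2]⟩),
        show -α + 1 = 1 - α from by ring]
    rw [e, div_le_iff_of_neg h1α, ← hBd] at h2
    have hfin : (α-1) * δ ≤ y1 t ^ (1-α) := by nlinarith [h2, hL]
    calc y1 t = (y1 t ^ (1-α)) ^ (1/(1-α)) := by
          rw [← Real.rpow_mul hy1t.le, one_div, mul_inv_cancel₀ h1α.ne, Real.rpow_one]
      _ ≤ ((α-1) * δ) ^ (1/(1-α)) :=
          Real.rpow_le_rpow_of_nonpos hεpos hfin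
            (le_of_lt (one_div_neg.mpr h1α))
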